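/- Let X be a Hausdorff space and let μ₁, μ₂ be finite tight Borel measures on X. If μ₂(closure A) ≥ μ₁(interior A) for every Borel set A ⊆ X and μ₁(X) = μ₂(X), then μ₁ = μ₂. -/

import Mathlib

open MeasureTheory Topology

theorem stmt1 {X : Type*} [TopologicalSpace X] [T2Space X] [MeasurableSpace X] [BorelSpace X]
    (μ₁ μ₂ : Measure X) [IsFiniteMeasure μ₁] [IsFiniteMeasure μ₂]
    (h₁ : μ₁.InnerRegularWRT IsCompact MeasurableSet)
    (h₂ : μ₂.InnerRegularWRT IsCompact MeasurableSet)
    (hcl : ∀ A : Set X, MeasurableSet A → μ₁ (interior A) ≤ μ₂ (closure A))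
    (hmass : μ₁ Set.univ = μ₂ Set.univ) :
    μ₁ = μ₂ := by
  have key : ∀ K L : Set X, IsCompact K → IsCompact L → Disjoint K L →
      μ₁ K + μ₂ L ≤ μ₂ Set.univ := by
    intro K L hK hL hd
    obtain ⟨U, V, hUo, hVo, hKU, hLV, hUV⟩ := SeparatedNhds.of_isCompact_isCompact hK hL hd
    have h1 : μ₁ K ≤ μ₂ (closure U) :=
      calc μ₁ K ≤ μ₁ (interior U) := measure_mono (by rwa [hUo.interior_eq])
        _ ≤ μ₂ (closure U) := hcl U hUo.measurableSet
    have h2 : Disjoint (closure U) V := hUV.closure_left hVo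
    calc μ₁ K + μ₂ L ≤ μ₂ (closure U) + μ₂ V := add_le_add h1 (measure_mono hLV)
      _ = μ₂ (closure U ∪ V) := (measure_union h2 hVo.measurableSet).symm
      _ ≤ μ₂ Set.univ := measure_mono (Set.subset_univ _)
  have le : ∀ A : Set X, MeasurableSet A → μ₁ A ≤ μ₂ A := by
    intro A hA
    have step : ∀ K : Set X, K ⊆ A → IsCompact K → μ₁ K + μ₂ Aᶜ ≤ μ₂ Set.univ := by
      intro K hKA hK
      have hKle : μ₁ K ≤ μ₂ Set.univ := le_trans (measure_mono (Set.subset_univ _)) hmass.le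
      refine add_le_of_le_tsub_left_of_le hKle ?_
      rw [h₂.measure_eq_iSup hA.compl]
      refine iSup_le fun L => iSup_le fun hLA => iSup_le fun hL => ?_
      exact ENNReal.le_sub_of_add_le_left (measure_ne_top μ₁ K) <| key K L hK hL (Set.disjoint_left.2 fun x hxK hxL => hLA hxL (hKA hxK))
    have hA2 : μ₁ A ≤ μ₂ A := by
      rw [h₁.measure_eq_iSup hA]
      refine iSup_le fun K => iSup_le fun hKA => iSup_le fun hK => ?_
      have := step K hKA hK
      rw [← measure_add_measure_compl hA] at this
      exact ENNReal.le_of_add_le_add_right (measure_ne_top μ₂ Aᶜ) this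
    exact hA2
  ext A hA
  refine le_antisymm (le A hA) ?_
  have h1 := le Aᶜ hA.compl
  have e1 : μ₁ A + μ₁ Aᶜ = μ₂ A + μ₂ Aᶜ := by
    rw [measure_add_measure_compl hA, measure_add_measure_compl hA, hmass]
  have : μ₂ A + μ₁ Aᶜ ≤ μ₁ A + μ₁ Aᶜ := by
    rw [e1]
    exact add_le_add le_rfl h1
  exact ENNReal.le_of_add_le_add_right (measure_ne_top μ₁ Aᶜ) this
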